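/- For any 1 ≤ s < s' ≤ r and any subset A ⊆ [q] with A ⊉ [l] such that |A ∩ [l]| = l−1 and l+1 ∈ A, one has (σ_{e_s}σ_{e_{s'}} + σ_{e_{s'}}σ_{e_s})(ε_A) = 0 in the pivot resolution T_{1,…,l}. -/
import Mathlib


open MvPolynomial Finset

noncomputable section

/-- `fsign A B` is `0` if `A ∩ B ≠ ∅`, and otherwise `(−1)^{p(A,B)}` where `p(A,B)`
is the number of pairs `(a,b) ∈ A × B` with `a > b`. -/
def fsign {α : Type*} [LinearOrder α] [DecidableEq α] (A B : Finset α) : ℤ :=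
  if A ∩ B = ∅ then (-1 : ℤ) ^ (((A ×ˢ B).filter fun p => p.2 < p.1).card) else 0

/-- The total module underlying the Taylor complex: free over `Q = k[x_1,…,x_n]`
with basis `ε_τ` indexed by all subsets `τ ⊆ [q]`. -/
abbrev TotMod (k : Type*) [Field k] (n q : ℕ) : Type _ :=
  Finset (Fin q) →₀ MvPolynomial (Fin n) k

/-- `m_τ = lcm{m_i : i ∈ τ}`, where `m_i` is the monomial with exponent vector `D i`. -/
def lcmMono (k : Type*) [Field k] (n q : ℕ) (D : Fin q → (Fin n →₀ ℕ))
    (τ : Finset (Fin q)) : MvPolynomial (Fin n) k :=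
  monomial (τ.sup D) (1 : k)

/-- The monomial ideal `I = (m_1, …, m_q)`. -/
def monIdeal (k : Type*) [Field k] (n q : ℕ) (D : Fin q → (Fin n →₀ ℕ)) :
    Ideal (MvPolynomial (Fin n) k) :=
  Ideal.span (Set.range fun i => monomial (D i) (1 : k))

/-- The Taylor differential `∂(ε_τ) = Σ_{j∈τ} sign(j, τ∖{j}) (m_τ/m_{τ∖{j}}) ε_{τ∖{j}}`,
as a linear endomorphism of the total module. -/
def taylorD (k : Type*) [Field k] (n q : ℕ) (D : Fin q → (Fin n →₀ ℕ)) :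
    TotMod k n q →ₗ[MvPolynomial (Fin n) k] TotMod k n q :=
  Finsupp.linearCombination _ fun τ =>
    ∑ j ∈ τ, Finsupp.single (τ \ {j})
      ((fsign {j} (τ \ {j}) : MvPolynomial (Fin n) k) *
        monomial (τ.sup D - (τ \ {j}).sup D) (1 : k))

/-- The degree-`i` piece of the subcomplex of the Taylor complex spanned by the
`ε_τ` with `τ ∈ Ω`: the free submodule with basis `{ε_τ : τ ∈ Ω, |τ| = i}`. -/
def piece (k : Type*) [Field k] (n q : ℕ) (Ω : Set (Finset (Fin q))) (i : ℕ) :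
    Submodule (MvPolynomial (Fin n) k) (TotMod k n q) :=
  Finsupp.supported _ _ {τ | τ ∈ Ω ∧ τ.card = i}

/-- The subcomplex of the Taylor complex spanned by all `ε_τ` with `τ ∈ Ω`. -/
def subcx (k : Type*) [Field k] (n q : ℕ) (Ω : Set (Finset (Fin q))) :
    Submodule (MvPolynomial (Fin n) k) (TotMod k n q) :=
  Finsupp.supported _ _ Ω

/-- The index family of the pivot complex `T_S`: all `τ` with `τ ⊉ S`. -/
def pivotΩ {q : ℕ} (S : Finset (Fin q)) : Set (Finset (Fin q)) := {τ | ¬ S ⊆ τ}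

/-- The subcomplex of the Taylor complex spanned by `{ε_τ : τ ∈ Ω}` is a resolution
of `Q/I`: it is exact in homological degrees `≥ 1`, and its zeroth homology is
identified with `Q/I` via the augmentation `ε_∅ ↦ 1`. -/
def IsResolutionOf (k : Type*) [Field k] (n q : ℕ) (D : Fin q → (Fin n →₀ ℕ))
    (Ω : Set (Finset (Fin q))) : Prop :=
  (∀ i : ℕ, ∀ x ∈ piece k n q Ω (i + 1), taylorD k n q D x = 0 →
      ∃ y ∈ piece k n q Ω (i + 2), taylorD k n q D y = x) ∧
  (∀ x ∈ piece k n q Ω 0,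
      (x (∅ : Finset (Fin q)) ∈ monIdeal k n q D ↔
        ∃ y ∈ piece k n q Ω 1, taylorD k n q D y = x))

/-- The Scarf set of `I`: all `t` such that there are two distinct subsets
`τ ≠ τ'` of `[q]` with `|τ| = t` and `m_τ = m_{τ'}`.  The Scarf number of `I`
is `sInf` of this set; `scarf(I) = ∞` corresponds to this set being empty. -/
def scarfSet (k : Type*) [Field k] (n q : ℕ) (D : Fin q → (Fin n →₀ ℕ)) : Set ℕ :=
  {t | ∃ τ τ' : Finset (Fin q), τ ≠ τ' ∧ τ.card = t ∧
        lcmMono k n q D τ = lcmMono k n q D τ'}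


/-- The index set `[l] = {1,…,l}`, realized as the first `l` elements of `Fin q`. -/
def Lset (q l : ℕ) : Finset (Fin q) :=
  Finset.univ.filter fun i => (i : ℕ) < l

/-- The pivot index `l+1`, realized as the element of `Fin q` with value `l`. -/
def pivElt (q l : ℕ) (hq : l < q) : Fin q := ⟨l, hq⟩

/-- The unique element `t` of `[l] ∖ A` (when it exists). -/
def tOf (q l : ℕ) (hq : l < q) (A : Finset (Fin q)) : Fin q :=
  if h : (Lset q l \ A).Nonempty then (Lset q l \ A).min' h else pivElt q l hq

/-- The sum `Σ_{j ∈ J} sign(j,A) a_{sj} (m_j m_A / m_{A∪{j}}) ε_{A∪{j}}`,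
where `c j = a_{sj}`. -/
def sigTerm (k : Type*) [Field k] (n q : ℕ) (D : Fin q → (Fin n →₀ ℕ))
    (c : Fin q → MvPolynomial (Fin n) k) (A J : Finset (Fin q)) : TotMod k n q :=
  ∑ j ∈ J, Finsupp.single (insert j A)
    ((fsign {j} A : MvPolynomial (Fin n) k) * c j *
      monomial (D j + A.sup D - (insert j A).sup D) (1 : k))

/-- The correction term
`(−1)^{l+1} sign(t,A) a_{st} Σ_{i∈[l]} sign(i, A∪{t}∖{i})
  (m_t m_A / m_{A∪{t}∪{l+1}∖{i}}) ε_{A∪{t}∪{l+1}∖{i}}`. -/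
def sigCorr (k : Type*) [Field k] (n q l : ℕ) (hq : l < q)
    (D : Fin q → (Fin n →₀ ℕ)) (c : Fin q → MvPolynomial (Fin n) k)
    (A : Finset (Fin q)) (t : Fin q) : TotMod k n q :=
  ∑ i ∈ Lset q l, Finsupp.single ((insert (pivElt q l hq) (insert t A)) \ {i})
    ((-1 : MvPolynomial (Fin n) k) ^ (l + 1) *
      (fsign {t} A : MvPolynomial (Fin n) k) * c t *
      (fsign {i} (insert t A \ {i}) : MvPolynomial (Fin n) k) *
      monomial (D t + A.sup D - ((insert (pivElt q l hq) (insert t A)) \ {i}).sup D)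
        (1 : k))

/-- The homotopy `σ_{e_s}` (for coefficients `c j = a_{sj}`), defined on basis
elements `ε_A` by the three-case formula of Theorem 5.1 of the paper. -/
def sigmaMap (k : Type*) [Field k] (n q l : ℕ) (hq : l < q)
    (D : Fin q → (Fin n →₀ ℕ)) (c : Fin q → MvPolynomial (Fin n) k) :
    TotMod k n q →ₗ[MvPolynomial (Fin n) k] TotMod k n q :=
  Finsupp.linearCombination _ fun A =>
    if (A ∩ Lset q l).card ≠ l - 1 then
      sigTerm k n q D c A Aᶜ
    else if pivElt q l hq ∈ A then
      sigTerm k n q D c A (insert (tOf q l hq A) A)ᶜ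
    else
      sigTerm k n q D c A (insert (tOf q l hq A) A)ᶜ +
        sigCorr k n q l hq D c A (tOf q l hq A)

/-- The element `a_s = Σ_{j=1}^q a_{sj} m_j`, for coefficients `c j = a_{sj}`. -/
def aElt (k : Type*) [Field k] (n q : ℕ) (D : Fin q → (Fin n →₀ ℕ))
    (c : Fin q → MvPolynomial (Fin n) k) : MvPolynomial (Fin n) k :=
  ∑ j : Fin q, c j * monomial (D j) (1 : k)
end

section Aux

/-- fsign of a singleton against a disjoint set. -/
lemma fsign_singleton {α : Type*} [LinearOrder α] [DecidableEq α] {j : α} {B : Finset α}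
    (h : j ∉ B) : fsign {j} B = (-1 : ℤ) ^ ((B.filter fun b => b < j).card) := by
  rw [fsign, if_pos (Finset.singleton_inter_of_notMem h)]
  congr 1
  rw [Finset.singleton_product, Finset.filter_map, Finset.card_map]
  rfl

lemma fsign_swap {α : Type*} [LinearOrder α] [DecidableEq α] {j j' : α} {A : Finset α}
    (hj : j ∉ A) (hj' : j' ∉ A) (hne : j ≠ j') :
    fsign {j} A * fsign {j'} (insert j A) = -(fsign {j'} A * fsign {j} (insert j' A)) := by
  have hj'i : j' ∉ insert j A := by simp [hne.symm, hj']
  have hji : j ∉ insert j' A := by simp [hne, hj]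
  rw [fsign_singleton hj, fsign_singleton hj', fsign_singleton hj'i, fsign_singleton hji]
  have h1 : ((insert j A).filter fun b => b < j').card
      = (A.filter fun b => b < j').card + if j < j' then 1 else 0 := by
    rw [Finset.filter_insert]
    split
    · rw [Finset.card_insert_of_notMem (by simp [hj])]
    · simp
  have h2 : ((insert j' A).filter fun b => b < j).card
      = (A.filter fun b => b < j).card + if j' < j then 1 else 0 := by
    rw [Finset.filter_insert]
    split
    · rw [Finset.card_insert_of_notMem (by simp [hj'])]
    · simp
  rw [h1, h2]
  rcases lt_or_gt_of_ne hne with h | h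
  · rw [if_pos h, if_neg (asymm h)]
    ring
  · rw [if_neg (asymm h), if_pos h]
    ring

lemma sum_erase_swap {ι M : Type*} [DecidableEq ι] [AddCommGroup M] (S : Finset ι)
    (f : ι → ι → M) :
    ∑ j ∈ S, ∑ j' ∈ S.erase j, f j j' = ∑ j ∈ S, ∑ j' ∈ S.erase j, f j' j := by
  have h : ∀ g : ι → ι → M,
      ∑ j ∈ S, ∑ j' ∈ S.erase j, g j j'
        = (∑ j ∈ S, ∑ j' ∈ S, g j j') - ∑ j ∈ S, g j j := by
    intro g
    rw [← Finset.sum_sub_distrib]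
    refine Finset.sum_congr rfl fun j hj => ?_
    rw [← Finset.add_sum_erase S (g j) hj]
    abel
  rw [h, h, Finset.sum_comm]

lemma Lset_card {q l : ℕ} (h : l ≤ q) : (Lset q l).card = l := by
  have : Lset q l = Finset.map (Fin.castLEEmb h) Finset.univ := by
    ext i
    simp only [Lset, Finset.mem_filter, Finset.mem_univ, true_and, Finset.mem_map,
      Fin.castLEEmb, Fin.castLE]
    constructor
    · intro hi; exact ⟨⟨i, hi⟩, by simp [Fin.ext_iff]⟩
    · rintro ⟨a, _, rfl⟩; exact a.2
  simp [this]

end Aux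

/-- **Lemma 5.8 of the paper.**
For any `1 ≤ s < s' ≤ r` and any `A ⊆ [q]` with `A ⊉ [l]`, `|A ∩ [l]| = l−1`
and `l+1 ∈ A`, one has `(σ_{e_s}σ_{e_{s'}} + σ_{e_{s'}}σ_{e_s})(ε_A) = 0` in the
pivot resolution `T_{1,…,l}`. -/
theorem sigma_anticomm_on_basis_codim_one {k : Type*} [Field k] {n q l : ℕ}
    (hl : 2 ≤ l) (hq : l < q)
    (D : Fin q → (Fin n →₀ ℕ))
    (hne : ∀ i : Fin q, D i ≠ 0)
    (hmin : ∀ i j : Fin q, i ≠ j → ¬ lcmMono k n q D {i} ∣ lcmMono k n q D {j})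
    (hgap : lcmMono k n q D {pivElt q l hq} ∣ lcmMono k n q D (Lset q l))
    (r : ℕ) (a : Fin r → Fin q → MvPolynomial (Fin n) k)
    (s s' : Fin r) (hss' : s < s') (A : Finset (Fin q))
    (hnsub : ¬ Lset q l ⊆ A) (hcard : (A ∩ Lset q l).card = l - 1)
    (hpiv : pivElt q l hq ∈ A) :
    sigmaMap k n q l hq D (a s) (sigmaMap k n q l hq D (a s') (Finsupp.single A 1)) +
      sigmaMap k n q l hq D (a s') (sigmaMap k n q l hq D (a s) (Finsupp.single A 1)) =
    0 := by
  classical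
  set t : Fin q := tOf q l hq A with ht
  -- Lset \ A = {t}
  have hsd_ne : (Lset q l \ A).Nonempty := by
    rw [Finset.sdiff_nonempty]; exact hnsub
  have hsd_card : (Lset q l \ A).card = 1 := by
    have h1 := Finset.card_sdiff_add_card_inter (Lset q l) A
    rw [Finset.inter_comm] at hcard
    rw [hcard, Lset_card hq.le] at h1
    omega
  obtain ⟨t₀, ht₀⟩ := Finset.card_eq_one.mp hsd_card
  have key : ∀ (B : Finset (Fin q)) (h : B.Nonempty) (u : Fin q), B = {u} → B.min' h = u := by
    rintro B h u rfl
    exact Finset.min'_singleton u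
  have htt : t = t₀ := by
    rw [ht, tOf, dif_pos hsd_ne]
    exact key _ hsd_ne _ ht₀
  have hsd : Lset q l \ A = {t} := by rw [htt]; exact ht₀
  have htL : t ∈ Lset q l := by
    have := Finset.mem_sdiff.mp (hsd ▸ Finset.mem_singleton_self t); exact this.1
  have htA : t ∉ A := by
    have := Finset.mem_sdiff.mp (hsd ▸ Finset.mem_singleton_self t); exact this.2
  have hLsub : Lset q l ⊆ insert t A := by
    intro i hi
    by_cases hiA : i ∈ A
    · exact Finset.mem_insert_of_mem hiA
    · have : i ∈ Lset q l \ A := Finset.mem_sdiff.mpr ⟨hi, hiA⟩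
      rw [hsd, Finset.mem_singleton] at this
      simp [this]
  have hpivL : pivElt q l hq ∉ Lset q l := by simp [Lset, pivElt]
  set S : Finset (Fin q) := (insert t A)ᶜ with hS
  -- facts for j ∈ S
  have hjS : ∀ j ∈ S, j ∉ A ∧ j ≠ t ∧ j ∉ Lset q l := by
    intro j hj
    rw [hS, Finset.mem_compl, Finset.mem_insert] at hj
    push_neg at hj
    exact ⟨hj.2, hj.1, fun hL => (hj.1 : j ≠ t) (by
      have := hLsub hL
      rcases Finset.mem_insert.mp this with h | h
      · exact h
      · exact absurd h hj.2)⟩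
  -- the value of sigmaMap's generating function at A and at insert j A
  have hval : ∀ (c : Fin q → MvPolynomial (Fin n) k),
      sigmaMap k n q l hq D c (Finsupp.single A 1)
        = sigTerm k n q D c A S := by
    intro c
    rw [sigmaMap, Finsupp.linearCombination_single, one_smul]
    rw [if_neg (by simp [hcard]), if_pos hpiv, ← ht, hS]
  have hvalB : ∀ (c : Fin q → MvPolynomial (Fin n) k), ∀ j ∈ S,
      ∀ x : MvPolynomial (Fin n) k,
      sigmaMap k n q l hq D c (Finsupp.single (insert j A) x)
        = x • sigTerm k n q D c (insert j A) (S.erase j) := by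
    intro c j hj x
    obtain ⟨hjA, hjt, hjL⟩ := hjS j hj
    have hcardB : ((insert j A) ∩ Lset q l).card = l - 1 := by
      rw [Finset.insert_inter_of_notMem hjL, hcard]
    have hpivB : pivElt q l hq ∈ insert j A := Finset.mem_insert_of_mem hpiv
    have hsdB : Lset q l \ insert j A = {t} := by
      rw [Finset.sdiff_insert, hsd, Finset.erase_eq_of_notMem (by simpa using hjt)]
    have htB : tOf q l hq (insert j A) = t := by
      rw [tOf, dif_pos (by rw [hsdB]; exact Finset.singleton_nonempty t)]
      exact key _ _ _ hsdB
    rw [sigmaMap, Finsupp.linearCombination_single]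
    rw [if_neg (by simp [hcardB]), if_pos hpivB, htB]
    congr 1
    rw [hS, ← Finset.compl_insert, Finset.insert_comm]
  -- now compute the composite
  have hcomp : ∀ (c c' : Fin q → MvPolynomial (Fin n) k),
      sigmaMap k n q l hq D c' (sigmaMap k n q l hq D c (Finsupp.single A 1))
        = ∑ j ∈ S, ∑ j' ∈ S.erase j, Finsupp.single (insert j' (insert j A))
            (((fsign {j} A : MvPolynomial (Fin n) k) * c j *
                monomial (D j + A.sup D - (insert j A).sup D) (1 : k)) *
              ((fsign {j'} (insert j A) : MvPolynomial (Fin n) k) * c' j' *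
                monomial (D j' + (insert j A).sup D
                  - (insert j' (insert j A)).sup D) (1 : k))) := by
    intro c c'
    rw [hval c, sigTerm, map_sum]
    refine Finset.sum_congr rfl fun j hj => ?_
    rw [hvalB c' j hj, sigTerm, Finset.smul_sum]
    refine Finset.sum_congr rfl fun j' _ => ?_
    rw [Finsupp.smul_single']
  rw [hcomp (a s') (a s), hcomp (a s) (a s')]
  -- swap the second sum
  rw [sum_erase_swap S (fun j j' => Finsupp.single (insert j' (insert j A))
            (((fsign {j} A : MvPolynomial (Fin n) k) * a s j *
                monomial (D j + A.sup D - (insert j A).sup D) (1 : k)) *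
              ((fsign {j'} (insert j A) : MvPolynomial (Fin n) k) * a s' j' *
                monomial (D j' + (insert j A).sup D
                  - (insert j' (insert j A)).sup D) (1 : k))))]
  rw [← Finset.sum_add_distrib]
  refine Finset.sum_eq_zero fun j hj => ?_
  rw [← Finset.sum_add_distrib]
  refine Finset.sum_eq_zero fun j' hj' => ?_
  obtain ⟨hjA, hjt, _⟩ := hjS j hj
  have hj'S : j' ∈ S := Finset.mem_of_mem_erase hj'
  obtain ⟨hj'A, _, _⟩ := hjS j' hj'S
  have hne : j' ≠ j := Finset.ne_of_mem_erase hj'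
  have hins : insert j (insert j' A) = insert j' (insert j A) := Finset.insert_comm j j' A
  rw [hins, ← Finsupp.single_add]
  refine Finsupp.single_eq_zero.mpr ?_
  -- monomial identity
  have hmono : (monomial (D j + A.sup D - (insert j A).sup D) (1 : k)) *
        (monomial (D j' + (insert j A).sup D - (insert j' (insert j A)).sup D) (1 : k))
      = (monomial (D j' + A.sup D - (insert j' A).sup D) (1 : k)) *
        (monomial (D j + (insert j' A).sup D - (insert j (insert j' A)).sup D) (1 : k)) := by
    have h1 : ∀ (B : Finset (Fin q)) (i : Fin q) (x : Fin n),
        ((insert i B).sup D) x = D i x ⊔ (B.sup D) x := by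
      intro B i x
      rw [Finset.sup_insert, Finsupp.sup_apply]
    have hexp : (D j + A.sup D - (insert j A).sup D) +
          (D j' + (insert j A).sup D - (insert j' (insert j A)).sup D)
        = (D j' + A.sup D - (insert j' A).sup D) +
          (D j + (insert j' A).sup D - (insert j (insert j' A)).sup D) := by
      ext x
      simp only [Finsupp.tsub_apply, Finsupp.add_apply, hins, h1]
      omega
    rw [monomial_mul, monomial_mul, one_mul, hexp]
  have hsign : (fsign {j} A : MvPolynomial (Fin n) k) *
        (fsign {j'} (insert j A) : MvPolynomial (Fin n) k)
      = -((fsign {j'} A : MvPolynomial (Fin n) k) *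
        (fsign {j} (insert j' A) : MvPolynomial (Fin n) k)) := by
    have h := fsign_swap hjA hj'A (fun h => hne h.symm)
    have hcast : ((fsign {j} A * fsign {j'} (insert j A) : ℤ) : MvPolynomial (Fin n) k)
        = ((-(fsign {j'} A * fsign {j} (insert j' A)) : ℤ) : MvPolynomial (Fin n) k) := by
      exact_mod_cast congrArg (fun z : ℤ => (z : MvPolynomial (Fin n) k)) h
    push_cast at hcast
    exact hcast
  rw [hins] at hmono
  linear_combination (a s' j * a s j' *
      ((monomial (D j + A.sup D - (insert j A).sup D) (1 : k)) *
        (monomial (D j' + (insert j A).sup D - (insert j' (insert j A)).sup D) (1 : k)))) * hsign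
    - ((fsign {j'} A : MvPolynomial (Fin n) k) *
        (fsign {j} (insert j' A) : MvPolynomial (Fin n) k) * a s' j * a s j') * hmono
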